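/- Consider Frenet states (s(t), n(t), α(t)) evolving as ṡ = v cos α/(1 − nκ(s)), ṅ = v sin α, α̇ = (v/l)·tan δ − κ(s)·v cos α/(1 − nκ(s)), with a unit-speed C² reference curve γ with tangent angle φ^γ, (φ^γ)' = κ, and 1 − n(t)κ(s(t)) > 0. Define Cartesian states (x(t), y(t), φ(t)) = F⁻¹(s(t), n(t), α(t)) = (γ_x(s) − n sin φ^γ(s), γ_y(s) + n cos φ^γ(s), φ^γ(s) + α). Then (x, y, φ) satisfies the Cartesian kinematic ODE ẋ = v cos φ, ẏ = v sin φ, φ̇ = (v/l)·tan δ. -/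

import Mathlib

open Real

/-- Index-reduction consistency (Eqs. (10)–(11) of the paper): if the Frenet
states `(s, n, α)` satisfy the Frenet-frame kinematic bicycle ODE along a
unit-speed C² reference curve `γ` (tangent angle `φγ`, curvature `κ`) with
`1 - n κ(s) > 0`, then the Cartesian states
`(x, y, φ) = F⁻¹(s, n, α)` satisfy the Cartesian kinematic ODE
`ẋ = v cos φ`, `ẏ = v sin φ`, `φ̇ = (v/l) tan δ`. -/
theorem frenet_ode_implies_cartesian_ode
    (γ : ℝ → ℝ × ℝ) (φγ κ : ℝ → ℝ)
    (hγ : ∀ σ, HasDerivAt γ (Real.cos (φγ σ), Real.sin (φγ σ)) σ)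
    (hφγ : ∀ σ, HasDerivAt φγ (κ σ) σ)
    (hκ : Continuous κ)
    (s n α v δ : ℝ → ℝ) (l : ℝ) (hl : 0 < l)
    (hpos : ∀ t, 0 < 1 - n t * κ (s t))
    (hs : ∀ t, HasDerivAt s (v t * Real.cos (α t) / (1 - n t * κ (s t))) t)
    (hn : ∀ t, HasDerivAt n (v t * Real.sin (α t)) t)
    (hα : ∀ t, HasDerivAt α
      (v t / l * Real.tan (δ t)
        - κ (s t) * v t * Real.cos (α t) / (1 - n t * κ (s t))) t) :
    ∀ t : ℝ,
      HasDerivAt (fun τ => (γ (s τ)).1 - n τ * Real.sin (φγ (s τ)))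
        (v t * Real.cos (φγ (s t) + α t)) t ∧
      HasDerivAt (fun τ => (γ (s τ)).2 + n τ * Real.cos (φγ (s τ)))
        (v t * Real.sin (φγ (s t) + α t)) t ∧
      HasDerivAt (fun τ => φγ (s τ) + α τ) (v t / l * Real.tan (δ t)) t := by

  intro t
  have hD : (1 - n t * κ (s t)) ≠ 0 := ne_of_gt (hpos t)
  set sd := v t * Real.cos (α t) / (1 - n t * κ (s t)) with hsd
  -- derivative of components of γ ∘ s
  have hx : HasDerivAt (fun σ => (γ σ).1) (Real.cos (φγ (s t))) (s t) :=
    (hγ (s t)).fst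
  have hy : HasDerivAt (fun σ => (γ σ).2) (Real.sin (φγ (s t))) (s t) :=
    (hγ (s t)).snd
  have hxs : HasDerivAt (fun τ => (γ (s τ)).1) (Real.cos (φγ (s t)) * sd) t :=
    hx.comp t (hs t)
  have hys : HasDerivAt (fun τ => (γ (s τ)).2) (Real.sin (φγ (s t)) * sd) t :=
    hy.comp t (hs t)
  have hφs : HasDerivAt (fun τ => φγ (s τ)) (κ (s t) * sd) t :=
    (hφγ (s t)).comp t (hs t)
  have hsin : HasDerivAt (fun τ => Real.sin (φγ (s τ)))
      (Real.cos (φγ (s t)) * (κ (s t) * sd)) t :=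
    hφs.sin
  have hcos : HasDerivAt (fun τ => Real.cos (φγ (s τ)))
      (-Real.sin (φγ (s t)) * (κ (s t) * sd)) t :=
    hφs.cos
  refine ⟨?_, ?_, ?_⟩
  · have h := hxs.sub ((hn t).mul hsin)
    refine h.congr_deriv ?_
    rw [Real.cos_add, hsd]
    field_simp
    ring
  · have h := hys.add ((hn t).mul hcos)
    refine h.congr_deriv ?_
    rw [Real.sin_add, hsd]
    field_simp
    ring
  · have h := hφs.add (hα t)
    refine h.congr_deriv ?_
    rw [hsd]
    field_simp

    ring
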